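/- Let k be a field of characteristic p > 0, n a natural number, and L : (Fin n → k) →ₗ[k] (Fin n → k) a k-linear map. Then the set {v : Fin n → k | for every i, (v i)^p + (L v) i = 0} is finite. -/

import Mathlib

open Polynomial in
/-- Auxiliary version over a perfect field. -/
theorem frobenius_add_linear_finite_kernel_perfect
    (K : Type*) [Field K] (p : ℕ) [hpf : Fact p.Prime] [CharP K p] [PerfectRing K p]
    (n : ℕ) (L : (Fin n → K) →ₗ[K] (Fin n → K)) :
    {v : Fin n → K | ∀ i : Fin n, (v i) ^ p + L v i = 0}.Finite := by
  classical
  set S : Set (Fin n → K) := {v | ∀ i : Fin n, (v i) ^ p + L v i = 0} with hSdef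
  -- the componentwise Frobenius, as a semilinear map
  let fr : (Fin n → K) →ₛₗ[frobenius K p] (Fin n → K) :=
    { toFun := fun v i => v i ^ p
      map_add' := fun v w => funext fun i => by simp [add_pow_char]
      map_smul' := fun c v => funext fun i => by
        simp [frobenius_def, mul_pow] }
  have fr_apply : ∀ v i, fr v i = v i ^ p := fun v i => rfl
  have hfr : ∀ v ∈ S, fr v = -(L v) := by
    intro v hv
    funext i
    have := hv i
    simp only [Pi.neg_apply]
    rw [fr_apply]
    linear_combination this
  -- a linearly independent spanning subset of S
  obtain ⟨b, hbS, hbspan, hbind⟩ := exists_linearIndependent K S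
  have hbfin : b.Finite := hbind.setFinite
  haveI : Fintype b := hbfin.fintype
  -- Frobenius images of b are linearly independent (Frobenius is bijective)
  have hj : ∀ m, fr.toAddMonoidHom m = 0 → m = 0 := by
    intro m hm
    funext i
    have : m i ^ p = 0 := by
      have := congrFun hm i
      simpa [fr_apply] using this
    exact pow_eq_zero_iff hpf.out.ne_zero |>.mp this
  have hind2 : LinearIndependent K (⇑fr.toAddMonoidHom ∘ (Subtype.val : b → (Fin n → K))) :=
    hbind.map_of_injective_injective (fun r => (frobeniusEquiv K p).symm r)
      fr.toAddMonoidHom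
      (fun r hr => by
        have := congrArg (frobeniusEquiv K p) hr
        simpa using this)
      hj
      (fun r m => by
        show fr ((frobeniusEquiv K p).symm r • m) = r • fr m
        rw [map_smulₛₗ, frobenius_apply_frobeniusEquiv_symm])
  -- the set of "constants"
  have hR0 : {x : K | x ^ p = x}.Finite := by
    have hq : (X ^ p - X : K[X]) ≠ 0 := by
      intro h
      have hc : (X ^ p - X : K[X]).coeff p = 1 := by
        rw [coeff_sub, coeff_X_pow, coeff_X_of_ne_one hpf.out.one_lt.ne']
        simp
      rw [h] at hc
      simp at hc
    refine (Polynomial.finite_setOf_isRoot hq).subset ?_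
    intro x hx
    simp only [Set.mem_setOf_eq, IsRoot, eval_sub, eval_pow, eval_X]
    rw [hx]
    ring
  -- every element of S is a combination of b with coefficients in {x | x^p = x}
  have key : ∀ v ∈ S, ∃ c : b → K, (∀ x : b, (c x) ^ p = c x) ∧
      (∑ x : b, c x • (x : Fin n → K)) = v := by
    intro v hv
    have hvspan : v ∈ Submodule.span K b := by
      rw [hbspan]
      exact Submodule.subset_span hv
    rw [← hbfin.coe_toFinset, Submodule.mem_span_finset] at hvspan
    obtain ⟨f, -, hf⟩ := hvspan
    have h1 : fr v = ∑ m ∈ hbfin.toFinset, (f m) ^ p • fr m := by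
      rw [← hf, map_sum]
      refine Finset.sum_congr rfl fun m _ => ?_
      rw [map_smulₛₗ, frobenius_def]
    have h2 : fr v = ∑ m ∈ hbfin.toFinset, f m • fr m := by
      rw [hfr v hv, ← hf, map_sum, neg_eq_iff_eq_neg, ← Finset.sum_neg_distrib]
      refine Finset.sum_congr rfl fun m hm => ?_
      rw [map_smul, hfr m (hbS (hbfin.mem_toFinset.mp hm))]
      simp
    have h3 : ∑ m ∈ hbfin.toFinset, ((f m) ^ p - f m) • fr m = 0 := by
      simp only [sub_smul, Finset.sum_sub_distrib]
      rw [← h1, ← h2, sub_self]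
    have h4 : ∑ x : b, ((f x) ^ p - f x) • fr x = 0 := by
      rw [show (∑ x : b, ((f x) ^ p - f x) • fr x) =
          ∑ m ∈ b.toFinset, ((f m) ^ p - f m) • fr m from
        Finset.sum_set_coe (f := fun m => ((f m) ^ p - f m) • fr m) b]
      rwa [← hbfin.toFinset_eq_toFinset]
    have h5 := Fintype.linearIndependent_iff.mp hind2 (fun x => (f x) ^ p - f x) h4
    refine ⟨fun x => f x, fun x => ?_, ?_⟩
    · exact sub_eq_zero.mp (h5 x)
    · rw [show (∑ x : b, f (x : Fin n → K) • (x : Fin n → K)) =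
          ∑ m ∈ b.toFinset, f m • m from
        Finset.sum_set_coe (f := fun m => f m • m) b]
      rw [hbfin.toFinset_eq_toFinset] at hf
      exact hf
  -- conclude
  have hpi : (Set.pi Set.univ fun _ : b => {x : K | x ^ p = x}).Finite :=
    Set.Finite.pi fun _ => hR0
  refine (hpi.image fun c => ∑ x : b, c x • (x : Fin n → K)).subset ?_
  intro v hv
  obtain ⟨c, hc1, hc2⟩ := key v hv
  exact ⟨c, fun x _ => hc1 x, hc2⟩

/-- Over a field of characteristic `p > 0`, the kernel of the sum of the componentwise
Frobenius map and a linear map is finite. -/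
theorem frobenius_add_linear_finite_kernel
    (k : Type*) [Field k] (p : ℕ) [CharP k p] (hp : 0 < p)
    (n : ℕ) (L : (Fin n → k) →ₗ[k] (Fin n → k)) :
    {v : Fin n → k | ∀ i : Fin n, (v i) ^ p + L v i = 0}.Finite := by
  haveI : NeZero p := ⟨hp.ne'⟩
  haveI : Fact p.Prime := CharP.char_is_prime_of_pos k p
  classical
  set K := PerfectClosure k p
  let ι : k →+* K := PerfectClosure.of k p
  have hι : Function.Injective ι := ι.injective
  let A := LinearMap.toMatrix' L
  let L' : (Fin n → K) →ₗ[K] (Fin n → K) := Matrix.mulVecLin (A.map ι)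
  have key := frobenius_add_linear_finite_kernel_perfect K p n L'
  refine Set.Finite.of_finite_image (f := fun v => ι ∘ v) (key.subset ?_) ?_
  · rintro w ⟨v, hv, rfl⟩
    intro i
    have hLv : L' (⇑ι ∘ v) i = ι (L v i) := by
      have hAv : Matrix.mulVec A v = L v := by
        rw [show Matrix.mulVec A v = Matrix.toLin' A v from (Matrix.toLin'_apply A v).symm]
        rw [Matrix.toLin'_toMatrix']
      show Matrix.mulVec (A.map ⇑ι) (⇑ι ∘ v) i = ι (L v i)
      rw [← hAv]
      simp [Matrix.mulVec, dotProduct, Matrix.map_apply, ← map_mul, ← map_sum,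
        Function.comp]
    show (ι (v i)) ^ p + L' (⇑ι ∘ v) i = 0
    rw [hLv, ← map_pow, ← map_add, hv i, map_zero]
  · intro a _ b _ h
    funext i
    exact hι (congrFun h i)
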